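/- Let X be a binomial random variable with parameters φ·n trials and success probability s/√n, where 0 < φ < θ < 1. Then P(X ≥ θ·s·√n) ≤ exp(−(s·√n·(θ−φ)²)/(θ+φ)), hence P(X ≤ θ·s·√n) ≥ 1 − exp(−(s·√n·(θ−φ)²)/(θ+φ)). -/

import Mathlib

open scoped Classical

/-- Upper tail `P(X ≥ t)` of a Binomial(N, p) random variable. -/
noncomputable def binomUpperTail (N : ℕ) (p t : ℝ) : ℝ :=
  ∑ i ∈ (Finset.range (N + 1)).filter (fun i : ℕ => t ≤ (i : ℝ)),
    (N.choose i : ℝ) * p ^ i * (1 - p) ^ (N - i)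

/-- Lower tail `P(X ≤ t)` of a Binomial(N, p) random variable. -/
noncomputable def binomLowerTail (N : ℕ) (p t : ℝ) : ℝ :=
  ∑ i ∈ (Finset.range (N + 1)).filter (fun i : ℕ => (i : ℝ) ≤ t),
    (N.choose i : ℝ) * p ^ i * (1 - p) ^ (N - i)

lemma key_log (r : ℝ) (hr : 1 ≤ r) : 2 * (r - 1) / (r + 1) ≤ Real.log r := by
  set f : ℝ → ℝ := fun x => Real.log x - 2 * (x - 1) / (x + 1) with hf
  have hderiv : ∀ x ∈ Set.Ioi (0:ℝ), HasDerivAt f (1 / x - 4 / (x + 1) ^ 2) x := by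
    intro x hx
    have hx0 : (0:ℝ) < x := hx
    have h1 : HasDerivAt Real.log (1 / x) x := by
      simpa [one_div] using Real.hasDerivAt_log hx0.ne'
    have hne : x + 1 ≠ 0 := by positivity
    have h2 : HasDerivAt (fun x : ℝ => 2 * (x - 1) / (x + 1)) (4 / (x + 1) ^ 2) x := by
      have := (((hasDerivAt_id x).sub_const 1).const_mul 2).div
        ((hasDerivAt_id x).add_const 1) hne
      refine this.congr_deriv ?_
      simp only [id]
      ring
    exact h1.sub h2
  have hmono : MonotoneOn f (Set.Ici 1) := by
    apply monotoneOn_of_deriv_nonneg (convex_Ici 1)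
    · intro x hx
      have hx0 : (0:ℝ) < x := lt_of_lt_of_le one_pos hx
      exact (hderiv x hx0).differentiableAt.continuousAt.continuousWithinAt
    · intro x hx
      rw [interior_Ici] at hx
      exact (hderiv x (show (0:ℝ) < x from lt_trans one_pos hx)).differentiableAt.differentiableWithinAt
    · intro x hx
      rw [interior_Ici] at hx
      rw [(hderiv x (show (0:ℝ) < x from lt_trans one_pos hx)).deriv]
      have hx1 : (1:ℝ) < x := hx
      rw [sub_nonneg, div_le_div_iff₀ (by positivity) (by positivity)]
      nlinarith
  have h0 : f 1 = 0 := by simp [hf]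
  have h2 := hmono Set.self_mem_Ici hr hr
  rw [h0] at h2
  have : 0 ≤ Real.log r - 2 * (r - 1) / (r + 1) := h2
  linarith

lemma term_nonneg (N i : ℕ) (p : ℝ) (hp0 : 0 ≤ p) (hp1 : p ≤ 1) :
    0 ≤ (N.choose i : ℝ) * p ^ i * (1 - p) ^ (N - i) :=
  mul_nonneg (mul_nonneg (by positivity) (pow_nonneg hp0 i)) (pow_nonneg (by linarith) _)

lemma binom_total (N : ℕ) (p : ℝ) :
    ∑ i ∈ Finset.range (N + 1), (N.choose i : ℝ) * p ^ i * (1 - p) ^ (N - i) = 1 := by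
  calc ∑ i ∈ Finset.range (N + 1), (N.choose i : ℝ) * p ^ i * (1 - p) ^ (N - i)
      = ∑ i ∈ Finset.range (N + 1), p ^ i * (1 - p) ^ (N - i) * (N.choose i : ℝ) := by
        apply Finset.sum_congr rfl; intro i _; ring
    _ = (p + (1 - p)) ^ N := (add_pow p (1 - p) N).symm
    _ = 1 := by norm_num

lemma chernoff_upper (N : ℕ) (p a t : ℝ) (hp0 : 0 ≤ p) (hp1 : p ≤ 1) (ht : 0 ≤ t) :
    binomUpperTail N p a ≤ Real.exp ((N : ℝ) * p * (Real.exp t - 1) - a * t) := by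
  set c := Real.exp t with hc
  have hc1 : 1 ≤ c := Real.one_le_exp ht
  have step1 : binomUpperTail N p a ≤
      Real.exp (-(a * t)) * ∑ i ∈ Finset.range (N + 1),
        (N.choose i : ℝ) * p ^ i * (1 - p) ^ (N - i) * c ^ i := by
    rw [Finset.mul_sum]
    unfold binomUpperTail
    apply le_trans (Finset.sum_le_sum (f := fun i =>
        (N.choose i : ℝ) * p ^ i * (1 - p) ^ (N - i))
      (g := fun i => Real.exp (-(a * t)) * ((N.choose i : ℝ) * p ^ i * (1 - p) ^ (N - i) * c ^ i))
      ?_)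
    · apply Finset.sum_le_sum_of_subset_of_nonneg (Finset.filter_subset _ _)
      intro i _ _
      exact mul_nonneg (Real.exp_pos _).le
        (mul_nonneg (term_nonneg N i p hp0 hp1) (pow_nonneg (by linarith) i))
    · intro i hi
      rw [Finset.mem_filter] at hi
      have hai : a ≤ (i : ℝ) := hi.2
      have hterm := term_nonneg N i p hp0 hp1
      have hkey : 1 ≤ Real.exp (-(a * t)) * c ^ i := by
        have : Real.exp (-(a * t)) * c ^ i = Real.exp (((i : ℝ) - a) * t) := by
          rw [hc, ← Real.exp_nat_mul, ← Real.exp_add]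
          ring_nf
        rw [this]
        exact Real.one_le_exp (mul_nonneg (by linarith) ht)
      calc (N.choose i : ℝ) * p ^ i * (1 - p) ^ (N - i)
          = ((N.choose i : ℝ) * p ^ i * (1 - p) ^ (N - i)) * 1 := by ring
        _ ≤ ((N.choose i : ℝ) * p ^ i * (1 - p) ^ (N - i)) * (Real.exp (-(a * t)) * c ^ i) :=
            by exact mul_le_mul_of_nonneg_left hkey hterm
        _ = Real.exp (-(a * t)) * ((N.choose i : ℝ) * p ^ i * (1 - p) ^ (N - i) * c ^ i) := by
            ring
  have step2 : ∑ i ∈ Finset.range (N + 1),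
      (N.choose i : ℝ) * p ^ i * (1 - p) ^ (N - i) * c ^ i = (p * c + (1 - p)) ^ N := by
    rw [add_pow]
    apply Finset.sum_congr rfl
    intro i _
    rw [mul_pow]
    ring
  have step3 : (p * c + (1 - p)) ^ N ≤ Real.exp ((N : ℝ) * (p * (c - 1))) := by
    have hbase : p * c + (1 - p) = 1 + p * (c - 1) := by ring
    have hb0 : 0 ≤ 1 + p * (c - 1) := by nlinarith
    calc (p * c + (1 - p)) ^ N = (1 + p * (c - 1)) ^ N := by rw [hbase]
      _ ≤ (Real.exp (p * (c - 1))) ^ N := pow_le_pow_left₀ hb0 (by linarith [Real.add_one_le_exp (p * (c - 1))]) N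
      _ = Real.exp ((N : ℝ) * (p * (c - 1))) := by rw [← Real.exp_nat_mul]
  calc binomUpperTail N p a
      ≤ Real.exp (-(a * t)) * ∑ i ∈ Finset.range (N + 1),
          (N.choose i : ℝ) * p ^ i * (1 - p) ^ (N - i) * c ^ i := step1
    _ = Real.exp (-(a * t)) * (p * c + (1 - p)) ^ N := by rw [step2]
    _ ≤ Real.exp (-(a * t)) * Real.exp ((N : ℝ) * (p * (c - 1))) := by
        exact mul_le_mul_of_nonneg_left step3 (Real.exp_pos _).le
    _ = Real.exp ((N : ℝ) * p * (c - 1) - a * t) := by rw [← Real.exp_add]; ring_nf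

/-- Chernoff upper-tail bound for X ~ Binomial(φ·n, s/√n):
P(X ≥ θ·s·√n) ≤ exp(−s√n(θ−φ)²/(θ+φ)), hence
P(X ≤ θ·s·√n) ≥ 1 − exp(−s√n(θ−φ)²/(θ+φ)). -/
theorem attack_completeness_chernoff (n N : ℕ) (s φ θ : ℝ)
    (hn : 0 < n) (hs : 0 < s)
    (hφ0 : 0 < φ) (hφθ : φ < θ) (hθ1 : θ < 1)
    (hN : (N : ℝ) = φ * n)
    (hp : s / Real.sqrt n ≤ 1) :
    binomUpperTail N (s / Real.sqrt n) (θ * s * Real.sqrt n)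
        ≤ Real.exp (-(s * Real.sqrt n * (θ - φ) ^ 2) / (θ + φ)) ∧
    1 - Real.exp (-(s * Real.sqrt n * (θ - φ) ^ 2) / (θ + φ))
        ≤ binomLowerTail N (s / Real.sqrt n) (θ * s * Real.sqrt n) := by
  set q := Real.sqrt n with hq
  have hq0 : 0 < q := Real.sqrt_pos.mpr (by exact_mod_cast hn)
  have hqq : q * q = (n : ℝ) := Real.mul_self_sqrt (by positivity)
  set p := s / q with hpdef
  have hp0 : 0 ≤ p := by positivity
  set a := θ * s * q with ha
  set t := Real.log (θ / φ) with htdef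
  have hθφ1 : 1 ≤ θ / φ := (one_le_div hφ0).mpr hφθ.le
  have ht0 : 0 ≤ t := Real.log_nonneg hθφ1
  have hexpt : Real.exp t = θ / φ := Real.exp_log (by positivity)
  have hNp : (N : ℝ) * p = φ * s * q := by
    rw [hN, hpdef, ← hqq]
    field_simp
  have hupper : binomUpperTail N p a ≤ Real.exp (-(s * q * (θ - φ) ^ 2) / (θ + φ)) := by
    refine le_trans (chernoff_upper N p a t hp0 hp ht0) ?_
    apply Real.exp_le_exp.mpr
    rw [hexpt, hNp]
    have hθφpos : (0:ℝ) < θ + φ := by linarith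
    have hL : 2 * (θ - φ) / (θ + φ) ≤ t := by
      have hk := key_log (θ / φ) hθφ1
      rw [htdef]
      refine le_trans (le_of_eq ?_) hk
      rw [div_eq_div_iff hθφpos.ne' (by positivity : ((θ:ℝ)/φ + 1) ≠ 0)]
      field_simp
    have h1 : θ * s * q * (2 * (θ - φ) / (θ + φ)) ≤ a * t := by
      rw [ha]
      exact mul_le_mul_of_nonneg_left hL (mul_nonneg (mul_nonneg (by linarith : (0:ℝ) ≤ θ) hs.le) hq0.le)
    have hident : φ * s * q * (θ / φ - 1) - θ * s * q * (2 * (θ - φ) / (θ + φ))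
        = -(s * q * (θ - φ) ^ 2) / (θ + φ) := by
      field_simp [hφ0.ne', hθφpos.ne']
      ring
    linarith
  constructor
  · exact hupper
  · have hsplit := Finset.sum_filter_add_sum_filter_not (Finset.range (N + 1))
      (fun i : ℕ => (i : ℝ) ≤ a)
      (fun i : ℕ => (N.choose i : ℝ) * p ^ i * (1 - p) ^ (N - i))
    have htot := binom_total N p
    have hsub : ∑ i ∈ (Finset.range (N + 1)).filter (fun i : ℕ => ¬ ((i : ℝ) ≤ a)),
        (N.choose i : ℝ) * p ^ i * (1 - p) ^ (N - i) ≤ binomUpperTail N p a := by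
      unfold binomUpperTail
      apply Finset.sum_le_sum_of_subset_of_nonneg
      · intro i hi
        simp only [Finset.mem_filter] at hi ⊢
        exact ⟨hi.1, (not_le.mp hi.2).le⟩
      · intro i _ _
        exact term_nonneg N i p hp0 hp
    have : binomLowerTail N p a =
        1 - ∑ i ∈ (Finset.range (N + 1)).filter (fun i : ℕ => ¬ ((i : ℝ) ≤ a)),
          (N.choose i : ℝ) * p ^ i * (1 - p) ^ (N - i) := by
      unfold binomLowerTail
      rw [htot] at hsplit
      linarith
    rw [this]
    have := le_trans hsub hupper
    linarith
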